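/- arXiv:2306.12543 — 2 statements merged into one kernel-verified Lean document; each statement's English description precedes it below -/
import Mathlib

section
/- Let F be a field, let A be a matrix over F with columns indexed by a set E, and let M be the column matroid of A (a subset of E is independent in M if and only if the corresponding family of columns is linearly independent). Let C₁, C₂ be circuits of M with |C₁ ∪ C₂| − r_M(C₁ ∪ C₂) = 2, and let C be a circuit of M with C ⊆ C₁ ∪ C₂. If x₁, x₂, x are vectors in the kernel of A whose supports are C₁, C₂, C respectively, then x lies in the linear span of {x₁, x₂}. -/
open Set Matroid
open scoped Matroid

namespace PaperLift

variable {α : Type} {β : Type}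

/-- A circuit of a matroid: a minimal dependent set. -/
def Circuit (M : Matroid α) (C : Set α) : Prop :=
  M.Dep C ∧ ∀ D, D ⊂ C → M.Indep D

/-- The rank of a set in a matroid: the supremum of cardinalities of independent subsets. -/
noncomputable def rk (M : Matroid α) (X : Set α) : ℕ :=
  sSup {n | ∃ I, M.Indep I ∧ I ⊆ X ∧ I.ncard = n}

/-- The rank of a matroid. -/
noncomputable def rank (M : Matroid α) : ℕ := rk M M.E

/-- Deletion of a set from a matroid. -/
def delete (M : Matroid α) (D : Set α) : Matroid α := M ↾ (M.E \ D)

/-- Contraction of a set in a matroid, defined by duality. -/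
noncomputable def contract (M : Matroid α) (C : Set α) : Matroid α := ((M✶) ↾ (M.E \ C))✶

/-- A hyperplane: a maximal proper flat. -/
def Hyperplane (M : Matroid α) (H : Set α) : Prop :=
  M.IsFlat H ∧ H ≠ M.E ∧ ∀ F, M.IsFlat F → H ⊂ F → F = M.E

/-- A circuit-hyperplane: a circuit that is also a hyperplane. -/
def CircuitHyperplane (M : Matroid α) (C : Set α) : Prop :=
  Circuit M C ∧ Hyperplane M C

/-- `L` is a lift of `M`: there is a matroid `K` on a ground set `E ∪ F`, with `F` disjoint
from `E = M.E`, such that `M = K / F` and `L = K \ F` (up to the canonical embedding). -/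
def IsLiftOf (L M : Matroid α) : Prop :=
  L.E = M.E ∧ ∃ (β : Type) (K : Matroid (α ⊕ β)) (F : Set (α ⊕ β)),
    Disjoint (Sum.inl '' M.E) F ∧ K.E = Sum.inl '' M.E ∪ F ∧
    contract K F = M.map Sum.inl Sum.inl_injective.injOn ∧
    delete K F = L.map Sum.inl Sum.inl_injective.injOn

/-- `N`, a matroid whose ground set is the set of circuits of `M`, satisfies the lift
condition for `M`. -/
def LiftCondition (M : Matroid α) (N : Matroid (Set α)) : Prop :=
  N.E = {C | Circuit M C} ∧
  ∀ C₁ C₂, Circuit M C₁ → Circuit M C₂ →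
    (C₁ ∪ C₂).ncard = rk M (C₁ ∪ C₂) + 2 →
    ∀ C, Circuit M C → C ⊆ C₁ ∪ C₂ → C ∈ N.closure {C₁, C₂}

/-- `L` has the rank function of the lift `M^N` of `M` constructed from `N`. -/
def IsLiftMatroid (M : Matroid α) (N : Matroid (Set α)) (L : Matroid α) : Prop :=
  L.E = M.E ∧ ∀ X ⊆ M.E, rk L X = rk M X + rk N {C | Circuit M C ∧ C ⊆ X}

/-- Matroid isomorphism: a bijection between ground sets preserving independence
in both directions. -/
def Iso (M : Matroid α) (N : Matroid β) : Prop :=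
  ∃ e : α → β, InjOn e M.E ∧ e '' M.E = N.E ∧ ∀ I ⊆ M.E, (M.Indep I ↔ N.Indep (e '' I))

/-- Representability of a matroid over a field `F`. -/
def Representable (M : Matroid α) (F : Type) [Field F] : Prop :=
  ∃ (W : Type) (_ : AddCommGroup W) (_ : Module F W) (φ : α → W),
    ∀ I ⊆ M.E, (M.Indep I ↔ InjOn φ I ∧ LinearIndependent F (fun e : I => φ e))

/-- A rank-`r` matroid is sparse paving if every `r`-element subset of the ground set is
either a base or a circuit-hyperplane. -/
def SparsePaving (M : Matroid α) : Prop :=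
  ∀ S ⊆ M.E, S.ncard = rank M → (M.IsBase S ∨ CircuitHyperplane M S)

/-- A perfect collection of circuits. -/
def Perfect (M : Matroid α) (Cs : Set (Set α)) : Prop :=
  Cs.Finite ∧ (∀ C ∈ Cs, Circuit M C) ∧
  (⋃₀ Cs).ncard = rk M (⋃₀ Cs) + Cs.ncard ∧
  ∀ C ∈ Cs, ¬ C ⊆ ⋃₀ (Cs \ {C})

/-- A linear class of circuits. -/
def LinearClass (M : Matroid α) (𝒞 : Set (Set α)) : Prop :=
  (∀ C ∈ 𝒞, Circuit M C) ∧
  ∀ C₁ ∈ 𝒞, ∀ C₂ ∈ 𝒞, (C₁ ∪ C₂).ncard = rk M (C₁ ∪ C₂) + 2 →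
    ∀ C, Circuit M C → C ⊆ C₁ ∪ C₂ → C ∈ 𝒞

/-- The circulant sets `C_i ⊆ [2t]` from the construction of `K(r,t)`. -/
def Ci (r t i : ℕ) : Set ℕ :=
  (fun k => (k + 2 * (i - 1) - 1) % (2 * t) + 1) '' (Set.Icc 1 (r - 2))

/-- The family `𝒞'(r,t)`. -/
def CC' (r t : ℕ) : Set (Set ℕ) :=
  (fun i => Ci r t i ∪ {2 * t + 1, 2 * t + 2}) '' (Set.Icc 1 t)

/-- The family `𝒞''(r,t)`. -/
def CC'' (r t : ℕ) : Set (Set ℕ) :=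
  (fun i => Ci r t i ∪ Ci r t (i + 1)) '' (Set.Icc 1 (t - 1))

/-- `K` is the matroid `K(r,t)`: a rank-`r` matroid on `[2t+2]` in which every `r`-element
subset is a base or a circuit-hyperplane, whose circuit-hyperplanes are exactly the members
of `𝒞'(r,t) ∪ 𝒞''(r,t)`. -/
def IsKrt (r t : ℕ) (K : Matroid ℕ) : Prop :=
  K.E = Set.Icc 1 (2 * t + 2) ∧ rank K = r ∧
  (∀ S ⊆ K.E, S.ncard = r → (K.IsBase S ∨ CircuitHyperplane K S)) ∧
  (∀ S, CircuitHyperplane K S ↔ S ∈ CC' r t ∪ CC'' r t)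

/-- A group partition: a partition of the non-identity elements such that each part
together with the identity is a subgroup. -/
def GroupPartition (Γ : Type) [Group Γ] (𝒜 : Set (Set Γ)) : Prop :=
  (∀ A ∈ 𝒜, A.Nonempty) ∧ (⋃₀ 𝒜 = {(1 : Γ)}ᶜ) ∧
  (∀ A ∈ 𝒜, ∀ B ∈ 𝒜, A ≠ B → Disjoint A B) ∧
  (∀ A ∈ 𝒜, ∃ H : Subgroup Γ, (H : Set Γ) = insert 1 A)



/-- Extension by zero of a function on a subtype, as a linear map. -/
noncomputable def extendL (F : Type) [Field F] {α : Type} (U : Set α)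
    [DecidablePred (· ∈ U)] :
    (U → F) →ₗ[F] (α → F) where
  toFun v := fun a => if h : a ∈ U then v ⟨a, h⟩ else 0
  map_add' u v := by funext a; by_cases h : a ∈ U <;> simp [h]
  map_smul' c v := by funext a; by_cases h : a ∈ U <;> simp [h]

/-- For the column matroid of a matrix `A`, a kernel vector supported on a circuit contained
in the union of a modular pair of circuits lies in the span of kernel vectors supported on
those two circuits. -/
theorem stmt15 {ι α : Type} [Fintype α] (F : Type) [Field F]
    (A : Matrix ι α F) (M : Matroid α) (hME : M.E = Set.univ)
    (hMI : ∀ I : Set α,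
      M.Indep I ↔ LinearIndependent F (fun e : I => fun i => A i (e : α)))
    (C₁ C₂ C : Set α) (h₁ : Circuit M C₁) (h₂ : Circuit M C₂)
    (hmod : (C₁ ∪ C₂).ncard = rk M (C₁ ∪ C₂) + 2)
    (hC : Circuit M C) (hCsub : C ⊆ C₁ ∪ C₂)
    (x₁ x₂ x : α → F)
    (hx₁ : A.mulVec x₁ = 0) (hx₂ : A.mulVec x₂ = 0) (hx : A.mulVec x = 0)
    (hs₁ : {e | x₁ e ≠ 0} = C₁) (hs₂ : {e | x₂ e ≠ 0} = C₂) (hsx : {e | x e ≠ 0} = C) :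
    x ∈ Submodule.span F {x₁, x₂} := by
  classical
  -- basic circuit facts
  have hnonempty : ∀ C', Circuit M C' → C'.Nonempty := by
    intro C' hC'
    rcases C'.eq_empty_or_nonempty with rfl | h
    · exact absurd M.empty_indep hC'.1.not_indep
    · exact h
  have hbdd : ∀ X : Set α, BddAbove {n | ∃ I, M.Indep I ∧ I ⊆ X ∧ I.ncard = n} := by
    intro X
    refine ⟨Fintype.card α, ?_⟩
    rintro n ⟨I, _, _, rfl⟩
    have h := Set.ncard_le_ncard (Set.subset_univ I) Set.finite_univ
    simpa [Set.ncard_univ] using h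
  have h0mem : ∀ X : Set α, 0 ∈ {n | ∃ I, M.Indep I ∧ I ⊆ X ∧ I.ncard = n} :=
    fun X => ⟨∅, M.empty_indep, Set.empty_subset X, Set.ncard_empty α⟩
  have hrk_lb : ∀ C', Circuit M C' → C'.ncard - 1 ≤ rk M C' := by
    intro C' hC'
    obtain ⟨e, he⟩ := hnonempty C' hC'
    have hind : M.Indep (C' \ {e}) := hC'.2 _ (Set.sdiff_singleton_ssubset.mpr he)
    have hc : (C' \ {e}).ncard = C'.ncard - 1 :=
      Set.ncard_diff_singleton_of_mem he
    exact le_csSup (hbdd C') ⟨_, hind, Set.diff_subset, hc⟩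
  have hC12 : C₁ ≠ C₂ := by
    rintro rfl
    rw [Set.union_self] at hmod
    have h1 := hrk_lb C₁ h₁
    have h2 : 0 < C₁.ncard := (Set.ncard_pos (Set.toFinite _)).mpr (hnonempty C₁ h₁)
    omega
  have hnsub : ∀ D D', Circuit M D → Circuit M D' → D ≠ D' → ¬ D ⊆ D' := by
    intro D D' hD hD' hne' hsub
    exact hD.1.not_indep (hD'.2 D (hsub.ssubset_of_ne hne'))
  obtain ⟨e₁, he₁, he₁'⟩ := Set.not_subset.mp (hnsub C₁ C₂ h₁ h₂ hC12)
  obtain ⟨e₂, he₂, he₂'⟩ := Set.not_subset.mp (hnsub C₂ C₁ h₂ h₁ (Ne.symm hC12))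
  -- linear algebra setup
  set U : Set α := C₁ ∪ C₂ with hUdef
  haveI : Fintype U := (Set.toFinite U).fintype
  set S : (U → F) →ₗ[F] (ι → F) := A.mulVecLin.comp (extendL F U) with hSdef
  have hsub1 : C₁ ⊆ U := Set.subset_union_left
  have hsub2 : C₂ ⊆ U := Set.subset_union_right
  -- rank lower bound for S
  obtain ⟨I, hI, hIU, hIcard⟩ : ∃ I, M.Indep I ∧ I ⊆ U ∧ I.ncard = rk M U :=
    Nat.sSup_mem ⟨0, h0mem U⟩ (hbdd U)
  haveI : Fintype I := (Set.toFinite I).fintype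
  have hg : LinearIndependent F (fun e : I => fun i => A i (e : α)) := (hMI I).mp hI
  have hrange : ∀ e : I, (fun i => A i (e : α)) ∈ LinearMap.range S := by
    intro e
    refine ⟨Pi.single ⟨(e : α), hIU e.2⟩ 1, ?_⟩
    have hext : extendL F U (Pi.single (⟨(e : α), hIU e.2⟩ : U) (1 : F)) =
        Pi.single (e : α) (1 : F) := by
      funext a
      by_cases h : a ∈ U
      · simp [extendL, h, Pi.single_apply, Subtype.ext_iff]
      · have hne : a ≠ (e : α) := by rintro rfl; exact h (hIU e.2)
        simp [extendL, h, Pi.single_apply, hne]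
    show A.mulVecLin (extendL F U _) = _
    rw [hext]
    funext i
    simp [Matrix.mulVecLin_apply, Matrix.mulVec_single]
  have hgrange : LinearIndependent F
      (fun e : I => (⟨(fun i => A i (e : α)), hrange e⟩ : LinearMap.range S)) := by
    apply LinearIndependent.of_comp (LinearMap.range S).subtype
    convert hg
    rfl
  haveI : FiniteDimensional F (LinearMap.range S) := inferInstance
  have hdim1 : rk M U ≤ Module.finrank F (LinearMap.range S) := by
    have h1 := hgrange.fintype_card_le_finrank
    have h3 : Fintype.card I = I.ncard := by
      rw [← Nat.card_coe_set_eq, Nat.card_eq_fintype_card]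
    omega
  -- nullity bound
  have hrn := LinearMap.finrank_range_add_finrank_ker S
  have hUcard : Module.finrank F (U → F) = U.ncard := by
    rw [Module.finrank_pi, ← Nat.card_coe_set_eq, Nat.card_eq_fintype_card]
  have hker2 : Module.finrank F (LinearMap.ker S) ≤ 2 := by
    rw [hUcard] at hrn
    omega
  -- the three restricted vectors
  set y₁ : U → F := fun u => x₁ u with hy₁
  set y₂ : U → F := fun u => x₂ u with hy₂
  set y : U → F := fun u => x u with hy
  have hextgen : ∀ (v : α → F) (w : U → F), (∀ a, a ∉ U → v a = 0) →
      (∀ u : U, w u = v u) → extendL F U w = v := by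
    intro v w hv hw
    funext a
    by_cases h : a ∈ U
    · simpa [extendL, h] using hw ⟨a, h⟩
    · simp [extendL, h, hv a h]
  have hext1 : extendL F U y₁ = x₁ := by
    refine hextgen _ _ (fun a ha => ?_) (fun u => rfl)
    by_contra hc
    exact ha (hsub1 (hs₁ ▸ hc))
  have hext2 : extendL F U y₂ = x₂ := by
    refine hextgen _ _ (fun a ha => ?_) (fun u => rfl)
    by_contra hc
    exact ha (hsub2 (hs₂ ▸ hc))
  have hextx : extendL F U y = x := by
    refine hextgen _ _ (fun a ha => ?_) (fun u => rfl)
    by_contra hc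
    exact ha (hCsub (hsx ▸ hc))
  have hk1 : y₁ ∈ LinearMap.ker S := by
    show A.mulVecLin (extendL F U y₁) = 0
    rw [hext1, Matrix.mulVecLin_apply, hx₁]
  have hk2 : y₂ ∈ LinearMap.ker S := by
    show A.mulVecLin (extendL F U y₂) = 0
    rw [hext2, Matrix.mulVecLin_apply, hx₂]
  have hky : y ∈ LinearMap.ker S := by
    show A.mulVecLin (extendL F U y) = 0
    rw [hextx, Matrix.mulVecLin_apply, hx]
  -- y₁, y₂ are linearly independent
  have hx2e1 : x₂ e₁ = 0 := by
    by_contra h; exact he₁' (hs₂ ▸ h)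
  have hx1e2 : x₁ e₂ = 0 := by
    by_contra h; exact he₂' (hs₁ ▸ h)
  have hx1e1 : x₁ e₁ ≠ 0 := by
    rw [← hs₁] at he₁; exact he₁
  have hx2e2 : x₂ e₂ ≠ 0 := by
    rw [← hs₂] at he₂; exact he₂
  have hindep : LinearIndependent F ![y₁, y₂] := by
    rw [LinearIndependent.pair_iff]
    intro s t hst
    have h1 := congrFun hst ⟨e₁, hsub1 he₁⟩
    have h2 := congrFun hst ⟨e₂, hsub2 he₂⟩
    simp only [Pi.add_apply, Pi.smul_apply, smul_eq_mul, Pi.zero_apply, hy₁, hy₂] at h1 h2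
    rw [hx2e1, mul_zero, add_zero] at h1
    rw [hx1e2, mul_zero, zero_add] at h2
    exact ⟨(mul_eq_zero.mp h1).resolve_right hx1e1,
      (mul_eq_zero.mp h2).resolve_right hx2e2⟩
  have hspan2 : Module.finrank F (Submodule.span F {y₁, y₂}) = 2 := by
    have h := finrank_span_eq_card hindep
    have hr : Set.range ![y₁, y₂] = {y₁, y₂} := by
      simp [Matrix.range_cons, Matrix.range_empty, Set.pair_comm]
    rw [hr] at h
    simpa using h
  have hle : Submodule.span F {y₁, y₂} ≤ LinearMap.ker S := by
    rw [Submodule.span_le]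
    rintro z hz
    rcases hz with rfl | hz
    · exact hk1
    · rcases hz with rfl
      exact hk2
  have heq : Submodule.span F {y₁, y₂} = LinearMap.ker S :=
    Submodule.eq_of_le_of_finrank_le hle (by rw [hspan2]; exact hker2)
  have hymem : y ∈ Submodule.span F {y₁, y₂} := heq ▸ hky
  have hxmem : x ∈ Submodule.map (extendL F U) (Submodule.span F {y₁, y₂}) :=
    ⟨y, hymem, hextx⟩
  rwa [Submodule.map_span, Set.image_insert_eq, Set.image_singleton, hext1, hext2] at hxmem


end PaperLift
end

section
/- Let Γ be a finite group with identity ε and let 𝒜 be a nontrivial group partition of Γ. If every two elements α, β ∈ Γ that lie in different parts of 𝒜 commute, then Γ is abelian. -/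
open Set Matroid
open scoped Matroid

namespace PaperLift

variable {α : Type} {β : Type}

/-- If elements in different parts of a nontrivial group partition always commute, then the
group is abelian. -/
theorem stmt16 (Γ : Type) [Group Γ] [Finite Γ] (𝒜 : Set (Set Γ))
    (hpart : GroupPartition Γ 𝒜) (hnt : Set.Nontrivial 𝒜)
    (hcomm : ∀ A ∈ 𝒜, ∀ B ∈ 𝒜, A ≠ B → ∀ a ∈ A, ∀ b ∈ B, a * b = b * a) :
    ∀ x y : Γ, x * y = y * x := by
  obtain ⟨hne, hunion, hdisj, hsub⟩ := hpart
  have mem_part : ∀ x : Γ, x ≠ 1 → ∃ A ∈ 𝒜, x ∈ A := by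
    intro x hx
    have hmem : x ∈ ⋃₀ 𝒜 := by rw [hunion]; exact hx
    simpa using hmem
  have one_not : ∀ A ∈ 𝒜, (1 : Γ) ∉ A := by
    intro A hA h1
    have hmem : (1 : Γ) ∈ ⋃₀ 𝒜 := ⟨A, hA, h1⟩
    rw [hunion] at hmem; simp at hmem
  intro x y
  rcases eq_or_ne x 1 with rfl | hx
  · simp
  rcases eq_or_ne y 1 with rfl | hy
  · simp
  obtain ⟨A, hA, hxA⟩ := mem_part x hx
  obtain ⟨B, hB, hyB⟩ := mem_part y hy
  rcases eq_or_ne A B with rfl | hAB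
  swap
  · exact hcomm A hA B hB hAB x hxA y hyB
  -- x and y lie in the same part A
  obtain ⟨C, hC, D, hD, hCD⟩ := hnt
  have hB' : ∃ B' ∈ 𝒜, B' ≠ A := by
    rcases eq_or_ne C A with rfl | h
    · exact ⟨D, hD, fun h' => hCD h'.symm⟩
    · exact ⟨C, hC, h⟩
  obtain ⟨B', hB'𝒜, hB'A⟩ := hB'
  obtain ⟨c, hcB'⟩ := hne B' hB'𝒜
  obtain ⟨H, hH⟩ := hsub A hA
  have hyH : y ∈ H := by rw [← SetLike.mem_coe, hH]; exact Set.mem_insert_of_mem _ hyB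
  have hcA : c ∉ A := fun hcA =>
    (Set.disjoint_left.mp (hdisj A hA B' hB'𝒜 (Ne.symm hB'A)) hcA) hcB'
  have hyc_not : y * c ∉ A := by
    intro hmem
    have hycH : y * c ∈ H := by rw [← SetLike.mem_coe, hH]; exact Set.mem_insert_of_mem _ hmem
    have hcH : c ∈ H := by
      have := H.mul_mem (H.inv_mem hyH) hycH
      simpa using this
    rw [← SetLike.mem_coe, hH] at hcH
    rcases hcH with h1 | h2
    · exact one_not B' hB'𝒜 (h1 ▸ hcB')
    · exact hcA h2
  have hyc_ne : y * c ≠ 1 := by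
    intro h
    have hcH : c ∈ H := by
      have := H.mul_mem (H.inv_mem hyH) (h ▸ H.one_mem : y * c ∈ H)
      simpa using this
    rw [← SetLike.mem_coe, hH] at hcH
    rcases hcH with h1 | h2
    · exact one_not B' hB'𝒜 (h1 ▸ hcB')
    · exact hcA h2
  obtain ⟨E, hE, hycE⟩ := mem_part (y * c) hyc_ne
  have hEA : A ≠ E := fun h => hyc_not (h ▸ hycE)
  have h1 : x * c = c * x := hcomm A hA B' hB'𝒜 (Ne.symm hB'A) x hxA c hcB'
  have h2 : x * (y * c) = (y * c) * x := hcomm A hA E hE hEA x hxA (y * c) hycE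
  have : (x * y) * c = (y * x) * c := by
    calc (x * y) * c = x * (y * c) := by group
      _ = (y * c) * x := h2
      _ = y * (c * x) := by group
      _ = y * (x * c) := by rw [h1]
      _ = (y * x) * c := by group
  exact mul_right_cancel this

end PaperLift
end
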